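/- Let p > 0 and let a, b, c be nonnegative real numbers. Consider all 3×3 symmetric matrices (p_{ij}) with positive entries, diagonal entries equal to 1, satisfying p_{ij} ≤ 2^p·p_{ik}·p_{jk} for all distinct i, j, k and p_{ij}² ≥ 2^{−p} for all i < j. Then the supremum of p_{12}^{c−a−b}·p_{13}^{b−a−c}·p_{23}^{a−b−c} over all such matrices equals: 2^{ap} if a > b+c; 2^{bp} if b > a+c; 2^{cp} if c > a+b; and 2^{p(a+b+c)/2} otherwise. -/
import Mathlib

private lemma two_rpow_le' {s t : ℝ} (h : s ≤ t) : (2:ℝ)^s ≤ (2:ℝ)^t :=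
  (Real.rpow_le_rpow_left_iff (by norm_num)).mpr h

private lemma mem_aux (p a b c x y z : ℝ) (hx : 0 < x) (hy : 0 < y) (hz : 0 < z)
    (h1 : x ≤ (2:ℝ)^p*(y*z)) (h2 : y ≤ (2:ℝ)^p*(x*z)) (h3 : z ≤ (2:ℝ)^p*(x*y))
    (l1 : (2:ℝ)^(-p) ≤ x^2) (l2 : (2:ℝ)^(-p) ≤ y^2) (l3 : (2:ℝ)^(-p) ≤ z^2) :
    (x ^ (c - a - b) * y ^ (b - a - c) * z ^ (a - b - c)) ∈
    {r : ℝ | ∃ M : Matrix (Fin 3) (Fin 3) ℝ, M.IsSymm ∧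
        (∀ i j, 0 < M i j) ∧ (∀ i, M i i = 1) ∧
        (∀ i j k : Fin 3, i ≠ j → i ≠ k → j ≠ k →
          M i j ≤ (2:ℝ) ^ p * (M i k * M j k)) ∧
        (∀ i j : Fin 3, i < j → (2:ℝ) ^ (-p) ≤ (M i j) ^ 2) ∧
        r = M 0 1 ^ (c - a - b) * M 0 2 ^ (b - a - c) * M 1 2 ^ (a - b - c)} := by
  refine ⟨!![1, x, y; x, 1, z; y, z, 1], ?_, ?_, ?_, ?_, ?_, ?_⟩
  · rw [Matrix.IsSymm]
    ext i j
    fin_cases i <;> fin_cases j <;> simp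
  · intro i j
    fin_cases i <;> fin_cases j <;> simp [hx, hy, hz]
  · intro i
    fin_cases i <;> simp
  · intro i j k hij hik hjk
    fin_cases i <;> fin_cases j <;> fin_cases k <;> simp_all <;> linarith [h1, h2, h3]
  · intro i j hij
    fin_cases i <;> fin_cases j <;> simp_all
  · simp

private lemma ub_aux (p a b c : ℝ) (ha : 0 ≤ a) (hb : 0 ≤ b) (hc : 0 ≤ c)
    (x y z : ℝ) (hx : 0 < x) (hy : 0 < y) (hz : 0 < z)
    (h1 : x ≤ (2:ℝ)^p*(y*z)) (h2 : y ≤ (2:ℝ)^p*(x*z)) (h3 : z ≤ (2:ℝ)^p*(x*y))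
    (l1 : (2:ℝ)^(-p) ≤ x^2) (l2 : (2:ℝ)^(-p) ≤ y^2) (l3 : (2:ℝ)^(-p) ≤ z^2) :
    x ^ (c - a - b) * y ^ (b - a - c) * z ^ (a - b - c) ≤
      (if b + c < a then (2:ℝ) ^ (a * p)
       else if a + c < b then (2:ℝ) ^ (b * p)
       else if a + b < c then (2:ℝ) ^ (c * p)
       else (2:ℝ) ^ (p * (a + b + c) / 2)) := by
  have h2pos : (0:ℝ) < 2 := by norm_num
  set L := Real.log 2 with hL
  have hLpos : 0 < L := Real.log_pos (by norm_num)
  have key : ∀ u v : ℝ, 0 < u → 0 < v → ∀ w : ℝ, 0 < w → w ≤ (2:ℝ)^p*(u*v) →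
      Real.log w ≤ p * L + Real.log u + Real.log v := by
    intro u v hu hv w hw hwle
    have := Real.log_le_log hw hwle
    rw [Real.log_mul (by positivity) (by positivity),
      Real.log_mul (by positivity) (by positivity), Real.log_rpow h2pos] at this
    rw [hL]
    linarith
  have g1 := key y z hy hz x hx h1
  have g2 := key x z hx hz y hy h2
  have g3 := key x y hx hy z hz h3
  have low : ∀ u : ℝ, 0 < u → (2:ℝ)^(-p) ≤ u^2 → -(p*L) ≤ 2 * Real.log u := by
    intro u hu hle
    have := Real.log_le_log (by positivity) hle
    rwa [Real.log_rpow h2pos, Real.log_pow, neg_mul] at this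
  have k1 := low x hx l1
  have k2 := low y hy l2
  have k3 := low z hz l3
  have goalform : ∀ V : ℝ,
      (c-a-b) * Real.log x + (b-a-c) * Real.log y + (a-b-c) * Real.log z ≤ V * L →
      x ^ (c - a - b) * y ^ (b - a - c) * z ^ (a - b - c) ≤ (2:ℝ) ^ V := by
    intro V hV
    rw [← Real.log_le_log_iff (by positivity) (by positivity)]
    rwa [Real.log_mul (by positivity) (by positivity),
      Real.log_mul (by positivity) (by positivity), Real.log_rpow h2pos,
      Real.log_rpow hx, Real.log_rpow hy, Real.log_rpow hz]
  split_ifs with hcase1 hcase2 hcase3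
  · refine goalform _ ?_
    nlinarith [mul_nonneg (by linarith : (0:ℝ) ≤ a - b - c) (by linarith : 0 ≤ p * L + Real.log x + Real.log y - Real.log z),
      mul_nonneg hb (by linarith : 0 ≤ 2 * Real.log x + p * L),
      mul_nonneg hc (by linarith : 0 ≤ 2 * Real.log y + p * L)]
  · refine goalform _ ?_
    nlinarith [mul_nonneg (by linarith : (0:ℝ) ≤ b - a - c) (by linarith : 0 ≤ p * L + Real.log x + Real.log z - Real.log y),
      mul_nonneg ha (by linarith : 0 ≤ 2 * Real.log x + p * L),
      mul_nonneg hc (by linarith : 0 ≤ 2 * Real.log z + p * L)]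
  · refine goalform _ ?_
    nlinarith [mul_nonneg (by linarith : (0:ℝ) ≤ c - a - b) (by linarith : 0 ≤ p * L + Real.log y + Real.log z - Real.log x),
      mul_nonneg ha (by linarith : 0 ≤ 2 * Real.log y + p * L),
      mul_nonneg hb (by linarith : 0 ≤ 2 * Real.log z + p * L)]
  · refine goalform _ ?_
    nlinarith [mul_nonneg (by linarith : (0:ℝ) ≤ a + b - c) (by linarith : 0 ≤ 2 * Real.log z + p * L),
      mul_nonneg (by linarith : (0:ℝ) ≤ a + c - b) (by linarith : 0 ≤ 2 * Real.log y + p * L),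
      mul_nonneg (by linarith : (0:ℝ) ≤ b + c - a) (by linarith : 0 ≤ 2 * Real.log x + p * L)]

theorem optimal_constants_T_p (p a b c : ℝ) (hp : 0 < p)
    (ha : 0 ≤ a) (hb : 0 ≤ b) (hc : 0 ≤ c) :
    IsLUB {r : ℝ | ∃ M : Matrix (Fin 3) (Fin 3) ℝ, M.IsSymm ∧
        (∀ i j, 0 < M i j) ∧ (∀ i, M i i = 1) ∧
        (∀ i j k : Fin 3, i ≠ j → i ≠ k → j ≠ k →
          M i j ≤ (2:ℝ) ^ p * (M i k * M j k)) ∧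
        (∀ i j : Fin 3, i < j → (2:ℝ) ^ (-p) ≤ (M i j) ^ 2) ∧
        r = M 0 1 ^ (c - a - b) * M 0 2 ^ (b - a - c) * M 1 2 ^ (a - b - c)}
      (if b + c < a then (2:ℝ) ^ (a * p)
       else if a + c < b then (2:ℝ) ^ (b * p)
       else if a + b < c then (2:ℝ) ^ (c * p)
       else (2:ℝ) ^ (p * (a + b + c) / 2)) := by
  have h2pos : (0:ℝ) < 2 := by norm_num
  have hq : (0:ℝ) < (2:ℝ)^(-(p/2)) := Real.rpow_pos_of_pos h2pos _
  -- basic rpow facts for the witnesses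
  have sq_q : ((2:ℝ)^(-(p/2)))^2 = (2:ℝ)^(-p) := by
    rw [pow_two, ← Real.rpow_add h2pos]; congr 1; ring
  have sq_one : (2:ℝ)^(-p) ≤ (1:ℝ)^2 := by
    rw [one_pow]
    calc (2:ℝ)^(-p) ≤ (2:ℝ)^(0:ℝ) := two_rpow_le' (by linarith)
      _ = 1 := Real.rpow_zero 2
  have prod_qq : (2:ℝ)^p * ((2:ℝ)^(-(p/2)) * (2:ℝ)^(-(p/2))) = 1 := by
    rw [← Real.rpow_add h2pos, ← Real.rpow_add h2pos,
      show p + (-(p/2) + -(p/2)) = 0 by ring, Real.rpow_zero]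
  have hq_le_q1 : (2:ℝ)^(-(p/2)) ≤ (2:ℝ)^p * ((2:ℝ)^(-(p/2)) * 1) := by
    rw [mul_one, ← Real.rpow_add h2pos]
    exact two_rpow_le' (by linarith)
  have hq_le_1q : (2:ℝ)^(-(p/2)) ≤ (2:ℝ)^p * (1 * (2:ℝ)^(-(p/2))) := by
    rw [one_mul, ← Real.rpow_add h2pos]
    exact two_rpow_le' (by linarith)
  have hq_le_qq : (2:ℝ)^(-(p/2)) ≤ (2:ℝ)^p * ((2:ℝ)^(-(p/2)) * (2:ℝ)^(-(p/2))) := by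
    rw [prod_qq]
    calc (2:ℝ)^(-(p/2)) ≤ (2:ℝ)^(0:ℝ) := two_rpow_le' (by linarith)
      _ = 1 := Real.rpow_zero 2
  have h1_le_qq : (1:ℝ) ≤ (2:ℝ)^p * ((2:ℝ)^(-(p/2)) * (2:ℝ)^(-(p/2))) := prod_qq.ge
  constructor
  · -- upper bound
    rintro r ⟨M, hsym, hpos, hdiag, hineq, hlow, hr⟩
    have e10 : M 1 0 = M 0 1 := hsym.apply 0 1
    have e20 : M 2 0 = M 0 2 := hsym.apply 0 2
    have e21 : M 2 1 = M 1 2 := hsym.apply 1 2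
    have h1 := hineq 0 1 2 (by decide) (by decide) (by decide)
    have h2 := hineq 0 2 1 (by decide) (by decide) (by decide)
    have h3 := hineq 1 2 0 (by decide) (by decide) (by decide)
    rw [e21] at h2
    rw [e10, e20] at h3
    have l1 := hlow 0 1 (by decide)
    have l2 := hlow 0 2 (by decide)
    have l3 := hlow 1 2 (by decide)
    rw [hr]
    exact ub_aux p a b c ha hb hc (M 0 1) (M 0 2) (M 1 2)
      (hpos 0 1) (hpos 0 2) (hpos 1 2) h1 h2 h3 l1 l2 l3
  · -- least upper bound: the value is attained
    intro u hu
    split_ifs with hcase1 hcase2 hcase3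
    · have hmem := mem_aux p a b c ((2:ℝ)^(-(p/2))) ((2:ℝ)^(-(p/2))) 1
        hq hq one_pos hq_le_q1 hq_le_q1 h1_le_qq
        (sq_q ▸ le_refl _) (sq_q ▸ le_refl _) sq_one
      have heq : ((2:ℝ)^(-(p/2))) ^ (c - a - b) * ((2:ℝ)^(-(p/2))) ^ (b - a - c)
          * (1:ℝ) ^ (a - b - c) = (2:ℝ) ^ (a * p) := by
        rw [Real.one_rpow, mul_one, ← Real.rpow_mul (by norm_num),
          ← Real.rpow_mul (by norm_num), ← Real.rpow_add h2pos]
        congr 1; ring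
      rw [heq] at hmem
      exact hu hmem
    · have hmem := mem_aux p a b c ((2:ℝ)^(-(p/2))) 1 ((2:ℝ)^(-(p/2)))
        hq one_pos hq hq_le_1q h1_le_qq hq_le_q1
        (sq_q ▸ le_refl _) sq_one (sq_q ▸ le_refl _)
      have heq : ((2:ℝ)^(-(p/2))) ^ (c - a - b) * (1:ℝ) ^ (b - a - c)
          * ((2:ℝ)^(-(p/2))) ^ (a - b - c) = (2:ℝ) ^ (b * p) := by
        rw [Real.one_rpow, mul_one, ← Real.rpow_mul (by norm_num),
          ← Real.rpow_mul (by norm_num), ← Real.rpow_add h2pos]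
        congr 1; ring
      rw [heq] at hmem
      exact hu hmem
    · have hmem := mem_aux p a b c 1 ((2:ℝ)^(-(p/2))) ((2:ℝ)^(-(p/2)))
        one_pos hq hq h1_le_qq hq_le_1q hq_le_1q
        sq_one (sq_q ▸ le_refl _) (sq_q ▸ le_refl _)
      have heq : (1:ℝ) ^ (c - a - b) * ((2:ℝ)^(-(p/2))) ^ (b - a - c)
          * ((2:ℝ)^(-(p/2))) ^ (a - b - c) = (2:ℝ) ^ (c * p) := by
        rw [Real.one_rpow, one_mul, ← Real.rpow_mul (by norm_num),
          ← Real.rpow_mul (by norm_num), ← Real.rpow_add h2pos]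
        congr 1; ring
      rw [heq] at hmem
      exact hu hmem
    · have hmem := mem_aux p a b c ((2:ℝ)^(-(p/2))) ((2:ℝ)^(-(p/2))) ((2:ℝ)^(-(p/2)))
        hq hq hq hq_le_qq hq_le_qq hq_le_qq
        (sq_q ▸ le_refl _) (sq_q ▸ le_refl _) (sq_q ▸ le_refl _)
      have heq : ((2:ℝ)^(-(p/2))) ^ (c - a - b) * ((2:ℝ)^(-(p/2))) ^ (b - a - c)
          * ((2:ℝ)^(-(p/2))) ^ (a - b - c) = (2:ℝ) ^ (p * (a + b + c) / 2) := by
        rw [← Real.rpow_mul (by norm_num), ← Real.rpow_mul (by norm_num),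
          ← Real.rpow_mul (by norm_num), ← Real.rpow_add h2pos, ← Real.rpow_add h2pos]
        congr 1; ring
      rw [heq] at hmem
      exact hu hmem
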